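/- Let n ≥ 2 be an integer, σ ∈ ℂ, and let ξ ∈ ℝ^{n+1} be a null covector (ξ·ξ = 0). For smooth complex-valued functions g on ℝ^{n+1} define the first-order operators X_{i0}g := x_i·∂g/∂x₀ + x₀·∂g/∂x_i (1 ≤ i ≤ n) and X_{ij}g := x_i·∂g/∂x_j − x_j·∂g/∂x_i (1 ≤ i < j ≤ n). Then on the open set U = {x ∈ ℝ^{n+1} : x·ξ > 0}, the function ψ(x) := exp(σ·log(x·ξ)) satisfies Σ_{1≤i<j≤n} X_{ij}²ψ − Σ_{i=1}^n X_{i0}²ψ = −σ(σ + n − 1)·ψ. In particular, with m_{i0} = iX_{i0} and m_{ij} = iX_{ij} the representations of the Lorentz generators, the de Sitter d'Alembertian □_{dS} = (1/R²)(𝐦² − 𝐣²) satisfies □_{dS}ψ = μ²ψ where μ²R² = −σ(n−1+σ). -/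

import Mathlib

/-- Minkowski inner product of signature (1,n) on `ℝ^{n+1}`. -/
def mdot {n : ℕ} (x ξ : Fin (n + 1) → ℝ) : ℝ :=
  -(x 0 * ξ 0) + ∑ i : Fin n, x i.succ * ξ i.succ

/-- Partial derivative `∂g/∂xₐ` of `g : ℝ^{n+1} → ℂ` at `x`. -/
noncomputable def pd {n : ℕ} (a : Fin (n + 1)) (g : (Fin (n + 1) → ℝ) → ℂ)
    (x : Fin (n + 1) → ℝ) : ℂ :=
  deriv (fun s : ℝ => g (Function.update x a s)) (x a)

/-- The boost generator `X_{i0}g = xᵢ·∂g/∂x₀ + x₀·∂g/∂xᵢ`, `1 ≤ i ≤ n`. -/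
noncomputable def Xb {n : ℕ} (i : Fin n) (g : (Fin (n + 1) → ℝ) → ℂ)
    (x : Fin (n + 1) → ℝ) : ℂ :=
  (x i.succ : ℂ) * pd 0 g x + (x 0 : ℂ) * pd i.succ g x

/-- The rotation generator `X_{ij}g = xᵢ·∂g/∂xⱼ − xⱼ·∂g/∂xᵢ`, `1 ≤ i,j ≤ n`. -/
noncomputable def Xr {n : ℕ} (i j : Fin n) (g : (Fin (n + 1) → ℝ) → ℂ)
    (x : Fin (n + 1) → ℝ) : ℂ :=
  (x i.succ : ℂ) * pd j.succ g x - (x j.succ : ℂ) * pd i.succ g x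


open Complex Finset Filter

noncomputable def eps {n : ℕ} (a : Fin (n + 1)) : ℝ := if a = 0 then -1 else 1

@[simp] lemma eps_zero {n : ℕ} : eps (0 : Fin (n + 1)) = -1 := by simp [eps]
@[simp] lemma eps_succ {n : ℕ} (i : Fin n) : eps i.succ = 1 := by
  simp [eps, Fin.succ_ne_zero]

lemma mdot_update {n : ℕ} (x ξ : Fin (n + 1) → ℝ) (a : Fin (n + 1)) (s : ℝ) :
    mdot (Function.update x a s) ξ = mdot x ξ + eps a * ξ a * (s - x a) := by
  induction a using Fin.cases with
  | zero =>
    simp only [mdot, eps, if_pos rfl, Function.update_self]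
    rw [Finset.sum_congr rfl (fun i _ => by
      rw [Function.update_of_ne (Fin.succ_ne_zero i)])]
    simp only [if_true]
    ring
  | succ b =>
    simp only [mdot, eps, if_neg (Fin.succ_ne_zero b),
      Function.update_of_ne (Fin.succ_ne_zero b).symm]
    have : ∀ i : Fin n, Function.update x b.succ s i.succ * ξ i.succ
        = x i.succ * ξ i.succ + (if i = b then (s - x b.succ) * ξ b.succ else 0) := by
      intro i
      by_cases h : i = b
      · subst h; simp [Function.update_self]; ring
      · rw [Function.update_of_ne (by simpa [Fin.succ_inj] using h)]
        simp [h]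
    rw [Finset.sum_congr rfl (fun i _ => this i), Finset.sum_add_distrib,
      Finset.sum_ite_eq' Finset.univ b]
    simp
    ring

lemma keyPsi (σ : ℂ) (r c t : ℝ) (hr : 0 < r) :
    HasDerivAt (fun s : ℝ => Complex.exp (σ * Complex.log ((r + c * (s - t) : ℝ) : ℂ)))
      (σ * (c : ℂ) * (r : ℂ)⁻¹ * Complex.exp (σ * Complex.log ((r : ℝ) : ℂ))) t := by
  have hf : HasDerivAt (fun s : ℝ => r + c * (s - t)) c t := by
    simpa using (((hasDerivAt_id t).sub_const t).const_mul c).const_add r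
  have hev : ∀ᶠ s in nhds t, 0 < r + c * (s - t) := by
    have : Filter.Tendsto (fun s : ℝ => r + c * (s - t)) (nhds t) (nhds r) := by
      have h := hf.continuousAt
      unfold ContinuousAt at h
      simpa using h
    exact this.eventually (eventually_gt_nhds hr)
  have hlog : HasDerivAt (fun s : ℝ => Real.log (r + c * (s - t))) (r⁻¹ * c) t := by
    have h0 : HasDerivAt Real.log r⁻¹ (r + c * (t - t)) := by
      simpa using Real.hasDerivAt_log hr.ne'
    exact h0.comp t hf
  have hC : HasDerivAt (fun s : ℝ => ((Real.log (r + c * (s - t)) : ℝ) : ℂ)) ((r⁻¹ * c : ℝ) : ℂ) t :=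
    hlog.ofReal_comp
  have hE : HasDerivAt (fun s : ℝ => Complex.exp (σ * ((Real.log (r + c * (s - t)) : ℝ) : ℂ)))
      (Complex.exp (σ * ((Real.log r : ℝ) : ℂ)) * (σ * ((r⁻¹ * c : ℝ) : ℂ))) t := by
    simpa using (hC.const_mul σ).cexp
  have heq : (fun s : ℝ => Complex.exp (σ * ((Real.log (r + c * (s - t)) : ℝ) : ℂ)))
      =ᶠ[nhds t] (fun s : ℝ => Complex.exp (σ * Complex.log ((r + c * (s - t) : ℝ) : ℂ))) := by
    filter_upwards [hev] with s hs
    rw [Complex.ofReal_log hs.le]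
  have := hE.congr_of_eventuallyEq heq.symm
  refine this.congr_deriv ?_
  rw [Complex.ofReal_log hr.le]
  push_cast
  ring

lemma key (σ : ℂ) (r c t : ℝ) (hr : 0 < r) (A d : ℂ) :
    HasDerivAt (fun s : ℝ => (A + d * ((s - t : ℝ) : ℂ)) * ((r + c * (s - t) : ℝ) : ℂ)⁻¹ *
        Complex.exp (σ * Complex.log ((r + c * (s - t) : ℝ) : ℂ)))
      ((d + (σ - 1) * (c : ℂ) * A * (r : ℂ)⁻¹) * (r : ℂ)⁻¹ *
        Complex.exp (σ * Complex.log ((r : ℝ) : ℂ))) t := by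
  have hf : HasDerivAt (fun s : ℝ => r + c * (s - t)) c t := by
    simpa using (((hasDerivAt_id t).sub_const t).const_mul c).const_add r
  have hA : HasDerivAt (fun s : ℝ => A + d * ((s - t : ℝ) : ℂ)) d t := by
    have h1 : HasDerivAt (fun s : ℝ => ((s - t : ℝ) : ℂ)) 1 t :=
      ((hasDerivAt_id t).sub_const t).ofReal_comp
    simpa using (h1.const_mul d).const_add A
  have hfC : HasDerivAt (fun s : ℝ => ((r + c * (s - t) : ℝ) : ℂ)) (c : ℂ) t := hf.ofReal_comp
  have hne : ((r + c * (t - t) : ℝ) : ℂ) ≠ 0 := by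
    simp only [sub_self, mul_zero, add_zero]
    exact_mod_cast hr.ne'
  have hinv0 : HasDerivAt (fun z : ℂ => z⁻¹) (-(((r + c * (t - t) : ℝ) : ℂ) ^ 2)⁻¹)
      ((r + c * (t - t) : ℝ) : ℂ) := hasDerivAt_inv hne
  have hInv : HasDerivAt (fun s : ℝ => ((r + c * (s - t) : ℝ) : ℂ)⁻¹)
      (-(((r : ℂ)) ^ 2)⁻¹ * (c : ℂ)) t := by
    have h2 := hinv0.comp t hfC
    simp only [sub_self, mul_zero, add_zero] at h2
    exact h2
  have hE := keyPsi σ r c t hr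
  have hprod := (hA.mul hInv).mul hE
  have hrne : (r : ℂ) ≠ 0 := by exact_mod_cast hr.ne'
  refine hprod.congr_deriv ?_
  simp only [Pi.mul_apply, sub_self, mul_zero, add_zero, Complex.ofReal_zero]
  field_simp
  ring

section Pointwise

variable {n : ℕ} (σ : ℂ) (ξ : Fin (n + 1) → ℝ)

noncomputable def Psi (σ : ℂ) (ξ : Fin (n + 1) → ℝ) : (Fin (n + 1) → ℝ) → ℂ :=
  fun z => Complex.exp (σ * Complex.log ((mdot z ξ : ℝ) : ℂ))

lemma pd_psi (a : Fin (n + 1)) (z : Fin (n + 1) → ℝ) (hz : 0 < mdot z ξ) :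
    pd a (Psi σ ξ) z
      = σ * ((eps a * ξ a : ℝ) : ℂ) * ((mdot z ξ : ℝ) : ℂ)⁻¹ * Psi σ ξ z := by
  unfold pd Psi
  have hline : (fun s : ℝ =>
        Complex.exp (σ * Complex.log ((mdot (Function.update z a s) ξ : ℝ) : ℂ)))
      = fun s : ℝ => Complex.exp (σ * Complex.log
          ((mdot z ξ + eps a * ξ a * (s - z a) : ℝ) : ℂ)) := by
    funext s; rw [mdot_update]
  rw [hline, (keyPsi σ (mdot z ξ) (eps a * ξ a) (z a) hz).deriv]

lemma pd_congr (g h : (Fin (n + 1) → ℝ) → ℂ) (a : Fin (n + 1)) (z : Fin (n + 1) → ℝ)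
    (hz : 0 < mdot z ξ) (heq : ∀ w, 0 < mdot w ξ → g w = h w) :
    pd a g z = pd a h z := by
  unfold pd
  apply Filter.EventuallyEq.deriv_eq
  have hc : Filter.Tendsto (fun s : ℝ => mdot z ξ + eps a * ξ a * (s - z a))
      (nhds (z a)) (nhds (mdot z ξ)) := by
    have hcont : Continuous fun s : ℝ => mdot z ξ + eps a * ξ a * (s - z a) := by continuity
    have h2 := hcont.continuousAt (x := z a)
    unfold ContinuousAt at h2
    simpa using h2
  have hev : ∀ᶠ s in nhds (z a), 0 < mdot (Function.update z a s) ξ := by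
    filter_upwards [hc.eventually (eventually_gt_nhds hz)] with s hs
    rw [mdot_update]; exact hs
  filter_upwards [hev] with s hs
  exact heq _ hs

lemma pd_G (p q : Fin (n + 1)) (α β : ℝ) (a : Fin (n + 1)) (z : Fin (n + 1) → ℝ)
    (hz : 0 < mdot z ξ) :
    pd a (fun w => σ * ((w p : ℂ) * (β : ℂ) - (w q : ℂ) * (α : ℂ)) *
        ((mdot w ξ : ℝ) : ℂ)⁻¹ * Psi σ ξ w) z
    = σ * ((((if p = a then (β : ℂ) else 0) - (if q = a then (α : ℂ) else 0))
          + (σ - 1) * ((eps a * ξ a : ℝ) : ℂ) * ((z p : ℂ) * β - (z q : ℂ) * α)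
            * ((mdot z ξ : ℝ) : ℂ)⁻¹)
        * ((mdot z ξ : ℝ) : ℂ)⁻¹ * Psi σ ξ z) := by
  unfold pd Psi
  set A : ℂ := (z p : ℂ) * β - (z q : ℂ) * α with hA
  set d : ℂ := (if p = a then (β : ℂ) else 0) - (if q = a then (α : ℂ) else 0) with hd
  have hline : (fun s : ℝ => σ * ((Function.update z a s p : ℂ) * (β : ℂ)
          - (Function.update z a s q : ℂ) * (α : ℂ))
        * ((mdot (Function.update z a s) ξ : ℝ) : ℂ)⁻¹
        * Complex.exp (σ * Complex.log ((mdot (Function.update z a s) ξ : ℝ) : ℂ)))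
      = fun s : ℝ => σ * ((A + d * ((s - z a : ℝ) : ℂ))
          * ((mdot z ξ + eps a * ξ a * (s - z a) : ℝ) : ℂ)⁻¹
          * Complex.exp (σ * Complex.log ((mdot z ξ + eps a * ξ a * (s - z a) : ℝ) : ℂ))) := by
    funext s
    rw [mdot_update]
    have hp : (Function.update z a s p : ℂ) * (β : ℂ) - (Function.update z a s q : ℂ) * (α : ℂ)
        = A + d * ((s - z a : ℝ) : ℂ) := by
      simp only [Function.update_apply, hA, hd]
      by_cases h1 : p = a
      · subst h1
        by_cases h2 : q = p
        · subst h2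
          simp only [if_pos rfl]
          push_cast; ring
        · simp only [if_pos rfl, if_neg h2]
          push_cast; ring
      · by_cases h2 : q = a
        · subst h2
          simp only [if_pos rfl, if_neg h1]
          push_cast; ring
        · simp only [if_neg h1, if_neg h2]
          push_cast; ring
    rw [hp]
    ring
  rw [hline,
    (HasDerivAt.const_mul σ (key σ (mdot z ξ) (eps a * ξ a) (z a) hz A d)).deriv]

end Pointwise

section Ops

variable {n : ℕ} (σ : ℂ) (ξ : Fin (n + 1) → ℝ)

lemma Xb_psi (i : Fin n) (z : Fin (n + 1) → ℝ) (hz : 0 < mdot z ξ) :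
    Xb i (Psi σ ξ) z = σ * ((z 0 : ℂ) * (ξ i.succ : ℂ) - (z i.succ : ℂ) * (ξ 0 : ℂ))
      * ((mdot z ξ : ℝ) : ℂ)⁻¹ * Psi σ ξ z := by
  rw [Xb, pd_psi σ ξ 0 z hz, pd_psi σ ξ i.succ z hz]
  simp only [eps_zero, eps_succ]
  push_cast
  ring

lemma Xr_psi (i j : Fin n) (z : Fin (n + 1) → ℝ) (hz : 0 < mdot z ξ) :
    Xr i j (Psi σ ξ) z = σ * ((z i.succ : ℂ) * (ξ j.succ : ℂ) - (z j.succ : ℂ) * (ξ i.succ : ℂ))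
      * ((mdot z ξ : ℝ) : ℂ)⁻¹ * Psi σ ξ z := by
  rw [Xr, pd_psi σ ξ j.succ z hz, pd_psi σ ξ i.succ z hz]
  simp only [eps_succ]
  push_cast
  ring

lemma Xb2 (i : Fin n) (z : Fin (n + 1) → ℝ) (hz : 0 < mdot z ξ) :
    Xb i (Xb i (Psi σ ξ)) z
      = σ * (((z i.succ : ℂ) * (ξ i.succ : ℂ) - (z 0 : ℂ) * (ξ 0 : ℂ))
          + (σ - 1) * ((z 0 : ℂ) * (ξ i.succ : ℂ) - (z i.succ : ℂ) * (ξ 0 : ℂ)) ^ 2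
            * ((mdot z ξ : ℝ) : ℂ)⁻¹)
        * ((mdot z ξ : ℝ) : ℂ)⁻¹ * Psi σ ξ z := by
  rw [Xb]
  have hcongr : ∀ a : Fin (n + 1), pd a (Xb i (Psi σ ξ)) z
      = pd a (fun w => σ * ((w 0 : ℂ) * ((ξ i.succ : ℝ) : ℂ) - (w i.succ : ℂ) * ((ξ 0 : ℝ) : ℂ))
          * ((mdot w ξ : ℝ) : ℂ)⁻¹ * Psi σ ξ w) z :=
    fun a => pd_congr ξ _ _ a z hz (fun w hw => Xb_psi σ ξ i w hw)
  rw [hcongr 0, hcongr i.succ,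
    pd_G σ ξ 0 i.succ (ξ 0) (ξ i.succ) 0 z hz,
    pd_G σ ξ 0 i.succ (ξ 0) (ξ i.succ) i.succ z hz]
  simp only [if_pos rfl, if_neg (Fin.succ_ne_zero i), if_neg (Fin.succ_ne_zero i).symm,
    eps_zero, eps_succ]
  push_cast
  ring

lemma Xr2 (i j : Fin n) (hij : i ≠ j) (z : Fin (n + 1) → ℝ) (hz : 0 < mdot z ξ) :
    Xr i j (Xr i j (Psi σ ξ)) z
      = σ * ((-((z i.succ : ℂ) * (ξ i.succ : ℂ)) - (z j.succ : ℂ) * (ξ j.succ : ℂ))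
          + (σ - 1) * ((z i.succ : ℂ) * (ξ j.succ : ℂ) - (z j.succ : ℂ) * (ξ i.succ : ℂ)) ^ 2
            * ((mdot z ξ : ℝ) : ℂ)⁻¹)
        * ((mdot z ξ : ℝ) : ℂ)⁻¹ * Psi σ ξ z := by
  rw [Xr]
  have hcongr : ∀ a : Fin (n + 1), pd a (Xr i j (Psi σ ξ)) z
      = pd a (fun w => σ * ((w i.succ : ℂ) * ((ξ j.succ : ℝ) : ℂ)
            - (w j.succ : ℂ) * ((ξ i.succ : ℝ) : ℂ))
          * ((mdot w ξ : ℝ) : ℂ)⁻¹ * Psi σ ξ w) z :=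
    fun a => pd_congr ξ _ _ a z hz (fun w hw => Xr_psi σ ξ i j w hw)
  have hne1 : i.succ ≠ j.succ := by simpa [Fin.succ_inj] using hij
  have hne2 : j.succ ≠ i.succ := by simpa [Fin.succ_inj] using hij.symm
  rw [hcongr j.succ, hcongr i.succ,
    pd_G σ ξ i.succ j.succ (ξ i.succ) (ξ j.succ) j.succ z hz,
    pd_G σ ξ i.succ j.succ (ξ i.succ) (ξ j.succ) i.succ z hz]
  simp only [if_pos rfl, if_neg hne1, if_neg hne2, eps_succ]
  push_cast
  ring

end Ops
lemma sum_lin (m : ℕ) (u v : Fin m → ℂ) (c0 c1 c2 c3 : ℂ) :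
    ∑ i : Fin m, (c0 + c1 * (u i * v i) + c2 * u i ^ 2 + c3 * v i ^ 2)
    = (m : ℂ) * c0 + c1 * (∑ i, u i * v i) + c2 * (∑ i, u i ^ 2)
      + c3 * (∑ i, v i ^ 2) := by
  simp [Finset.sum_add_distrib, ← Finset.mul_sum, Finset.sum_const, Finset.card_univ, mul_comm]

lemma strict_double (m : ℕ) (F : Fin m → Fin m → ℂ) (hsymm : ∀ i j, F j i = F i j)
    (hdiag : ∀ i, F i i = 0) :
    (∑ i : Fin m, ∑ j : Fin m, if i < j then F i j else 0) * 2
      = ∑ i : Fin m, ∑ j : Fin m, F i j := by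
  have h1 : (∑ i : Fin m, ∑ j : Fin m, if i < j then F i j else 0)
      = ∑ i : Fin m, ∑ j : Fin m, if j < i then F i j else 0 := by
    rw [Finset.sum_comm]
    exact Finset.sum_congr rfl fun i _ => Finset.sum_congr rfl fun j _ => by
      rw [hsymm]
  calc (∑ i : Fin m, ∑ j : Fin m, if i < j then F i j else 0) * 2
      = (∑ i : Fin m, ∑ j : Fin m, if i < j then F i j else 0)
        + ∑ i : Fin m, ∑ j : Fin m, if j < i then F i j else 0 := by rw [← h1]; ring
    _ = ∑ i : Fin m, ∑ j : Fin m, ((if i < j then F i j else 0) + (if j < i then F i j else 0)) := by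
        rw [← Finset.sum_add_distrib]
        exact Finset.sum_congr rfl fun i _ => by rw [← Finset.sum_add_distrib]
    _ = ∑ i : Fin m, ∑ j : Fin m, F i j := by
        refine Finset.sum_congr rfl fun i _ => Finset.sum_congr rfl fun j _ => ?_
        rcases lt_trichotomy i j with h | h | h
        · simp [h, lt_asymm h]
        · simp [h, hdiag]
        · simp [h, lt_asymm h]

lemma main_double (m : ℕ) (u v : Fin m → ℂ) (C D : ℂ) :
    (∑ i : Fin m, ∑ j : Fin m, if i < j then
        (C * (-(u i * v i) - u j * v j) + D * (u i * v j - u j * v i) ^ 2) else 0)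
    = -C * ((m : ℂ) - 1) * (∑ i, u i * v i)
      + D * ((∑ i, u i ^ 2) * (∑ i, v i ^ 2) - (∑ i, u i * v i) ^ 2) := by
  set W := ∑ i, u i * v i with hW
  set U := ∑ i, u i ^ 2 with hU
  set V := ∑ i, v i ^ 2 with hV
  set expr : Fin m → Fin m → ℂ :=
    fun i j => C * (-(u i * v i) - u j * v j) + D * (u i * v j - u j * v i) ^ 2 with hexpr
  set F : Fin m → Fin m → ℂ := fun i j => if i = j then 0 else expr i j with hF
  have step1 : (∑ i : Fin m, ∑ j : Fin m, if i < j then expr i j else 0)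
      = ∑ i : Fin m, ∑ j : Fin m, if i < j then F i j else 0 := by
    refine Finset.sum_congr rfl fun i _ => Finset.sum_congr rfl fun j _ => ?_
    by_cases h : i < j
    · simp [h, hF, ne_of_lt h]
    · simp [h]
  have hinner : ∀ i, ∑ j, expr i j
      = (m : ℂ) * (-C * (u i * v i)) + (-C - 2 * D * (u i * v i)) * W
        + (D * v i ^ 2) * U + (D * u i ^ 2) * V := by
    intro i
    rw [show ∑ j, expr i j = ∑ j : Fin m, ((-C * (u i * v i)) + (-C - 2 * D * (u i * v i)) * (u j * v j)
        + (D * v i ^ 2) * u j ^ 2 + (D * u i ^ 2) * v j ^ 2) from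
      Finset.sum_congr rfl fun j _ => by simp only [hexpr]; ring]
    rw [sum_lin]
  have hdiagsum : ∀ i : Fin m, ∑ j, F i j = (∑ j, expr i j) - expr i i := by
    intro i
    rw [show ∑ j, F i j = ∑ j : Fin m, (expr i j - if i = j then expr i j else 0) from
      Finset.sum_congr rfl fun j _ => by by_cases h : i = j <;> simp [hF, h]]
    rw [Finset.sum_sub_distrib, Finset.sum_ite_eq]
    simp
  have step3 : ∑ i : Fin m, ∑ j : Fin m, F i j
      = (-C * ((m : ℂ) - 1) * W + D * (U * V - W ^ 2)) * 2 := by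
    rw [Finset.sum_congr rfl fun i _ => (hdiagsum i)]
    rw [Finset.sum_congr rfl (fun i (_ : i ∈ Finset.univ) => by
      rw [hinner i])]
    rw [show ∑ i : Fin m, ((m : ℂ) * (-C * (u i * v i)) + (-C - 2 * D * (u i * v i)) * W
        + (D * v i ^ 2) * U + (D * u i ^ 2) * V - expr i i)
      = ∑ i : Fin m, ((-C * W) + (-(m : ℂ) * C - 2 * D * W + 2 * C) * (u i * v i)
        + (D * V) * u i ^ 2 + (D * U) * v i ^ 2) from
      Finset.sum_congr rfl fun i _ => by simp only [hexpr]; ring]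
    rw [sum_lin]
    ring
  have := strict_double m F (fun i j => by simp only [hF, hexpr]; rcases eq_or_ne i j with h|h
                                           · simp [h]
                                           · simp [h, h.symm]; ring)
    (fun i => by simp [hF])
  rw [step1]
  exact mul_right_cancel₀ two_ne_zero (this.trans step3)


/-- The de Sitter plane wave `ψ(x) = (x·ξ)^σ`, `ξ` a null covector, satisfies
`Σ_{i<j} X_{ij}²ψ − Σᵢ X_{i0}²ψ = −σ(σ+n−1)·ψ` on `{x·ξ > 0}`:  it is an
eigenfunction of (minus) the Casimir operator of the Lorentz algebra, so that
`□_{dS}ψ = μ²ψ` with `μ²R² = −σ(n−1+σ)`. -/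
theorem plane_wave_casimir (n : ℕ) (hn : 2 ≤ n) (σ : ℂ)
    (ξ : Fin (n + 1) → ℝ) (hnull : mdot ξ ξ = 0) :
    ∀ x : Fin (n + 1) → ℝ, 0 < mdot x ξ →
      (∑ i : Fin n, ∑ j : Fin n, if i < j then
          Xr i j (Xr i j (fun z => Complex.exp (σ * Complex.log ((mdot z ξ : ℝ) : ℂ)))) x
        else 0) -
        ∑ i : Fin n,
          Xb i (Xb i (fun z => Complex.exp (σ * Complex.log ((mdot z ξ : ℝ) : ℂ)))) x =
      -σ * (σ + (n : ℂ) - 1) * Complex.exp (σ * Complex.log ((mdot x ξ : ℝ) : ℂ)) := by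
  intro x hx
  have hψfun : (fun z : Fin (n + 1) → ℝ => Complex.exp (σ * Complex.log ((mdot z ξ : ℝ) : ℂ)))
      = Psi σ ξ := rfl
  rw [hψfun, show Complex.exp (σ * Complex.log ((mdot x ξ : ℝ) : ℂ)) = Psi σ ξ x from rfl]
  have hXrsum : (∑ i : Fin n, ∑ j : Fin n, if i < j then Xr i j (Xr i j (Psi σ ξ)) x else 0)
      = ∑ i : Fin n, ∑ j : Fin n, if i < j then
          ((σ * ((mdot x ξ : ℝ) : ℂ)⁻¹ * Psi σ ξ x)
              * (-(((x i.succ : ℝ) : ℂ) * ((ξ i.succ : ℝ) : ℂ))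
                  - ((x j.succ : ℝ) : ℂ) * ((ξ j.succ : ℝ) : ℂ))
            + (σ * (σ - 1) * ((mdot x ξ : ℝ) : ℂ)⁻¹ * ((mdot x ξ : ℝ) : ℂ)⁻¹ * Psi σ ξ x)
              * (((x i.succ : ℝ) : ℂ) * ((ξ j.succ : ℝ) : ℂ)
                  - ((x j.succ : ℝ) : ℂ) * ((ξ i.succ : ℝ) : ℂ)) ^ 2) else 0 := by
    refine Finset.sum_congr rfl fun i _ => Finset.sum_congr rfl fun j _ => ?_
    by_cases h : i < j
    · rw [if_pos h, if_pos h, Xr2 σ ξ i j (ne_of_lt h) x hx]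
      ring
    · rw [if_neg h, if_neg h]
  have hmd := main_double n (fun i => ((x i.succ : ℝ) : ℂ)) (fun i => ((ξ i.succ : ℝ) : ℂ))
    (σ * ((mdot x ξ : ℝ) : ℂ)⁻¹ * Psi σ ξ x)
    (σ * (σ - 1) * ((mdot x ξ : ℝ) : ℂ)⁻¹ * ((mdot x ξ : ℝ) : ℂ)⁻¹ * Psi σ ξ x)
  beta_reduce at hmd
  rw [hXrsum, hmd]
  have hXbsum : (∑ i : Fin n, Xb i (Xb i (Psi σ ξ)) x)
      = ∑ i : Fin n,
          ((-(σ * ((mdot x ξ : ℝ) : ℂ)⁻¹ * Psi σ ξ x * (((x 0 : ℝ) : ℂ) * ((ξ 0 : ℝ) : ℂ))))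
            + (σ * ((mdot x ξ : ℝ) : ℂ)⁻¹ * Psi σ ξ x
                - 2 * (σ * (σ - 1) * ((mdot x ξ : ℝ) : ℂ)⁻¹ * ((mdot x ξ : ℝ) : ℂ)⁻¹ * Psi σ ξ x)
                  * (((x 0 : ℝ) : ℂ) * ((ξ 0 : ℝ) : ℂ))) * (((x i.succ : ℝ) : ℂ) * ((ξ i.succ : ℝ) : ℂ))
            + (σ * (σ - 1) * ((mdot x ξ : ℝ) : ℂ)⁻¹ * ((mdot x ξ : ℝ) : ℂ)⁻¹ * Psi σ ξ x
                * ((ξ 0 : ℝ) : ℂ) ^ 2) * ((x i.succ : ℝ) : ℂ) ^ 2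
            + (σ * (σ - 1) * ((mdot x ξ : ℝ) : ℂ)⁻¹ * ((mdot x ξ : ℝ) : ℂ)⁻¹ * Psi σ ξ x
                * ((x 0 : ℝ) : ℂ) ^ 2) * ((ξ i.succ : ℝ) : ℂ) ^ 2) := by
    refine Finset.sum_congr rfl fun i _ => ?_
    rw [Xb2 σ ξ i x hx]
    ring
  have hsl := sum_lin n (fun i => ((x i.succ : ℝ) : ℂ)) (fun i => ((ξ i.succ : ℝ) : ℂ))
    (-(σ * ((mdot x ξ : ℝ) : ℂ)⁻¹ * Psi σ ξ x * (((x 0 : ℝ) : ℂ) * ((ξ 0 : ℝ) : ℂ))))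
    (σ * ((mdot x ξ : ℝ) : ℂ)⁻¹ * Psi σ ξ x
      - 2 * (σ * (σ - 1) * ((mdot x ξ : ℝ) : ℂ)⁻¹ * ((mdot x ξ : ℝ) : ℂ)⁻¹ * Psi σ ξ x)
        * (((x 0 : ℝ) : ℂ) * ((ξ 0 : ℝ) : ℂ)))
    (σ * (σ - 1) * ((mdot x ξ : ℝ) : ℂ)⁻¹ * ((mdot x ξ : ℝ) : ℂ)⁻¹ * Psi σ ξ x
      * ((ξ 0 : ℝ) : ℂ) ^ 2)
    (σ * (σ - 1) * ((mdot x ξ : ℝ) : ℂ)⁻¹ * ((mdot x ξ : ℝ) : ℂ)⁻¹ * Psi σ ξ x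
      * ((x 0 : ℝ) : ℂ) ^ 2)
  beta_reduce at hsl
  rw [hXbsum, hsl]
  -- now pure algebra
  have hS1 : (∑ i : Fin n, ((x i.succ : ℝ) : ℂ) * ((ξ i.succ : ℝ) : ℂ))
      = ((mdot x ξ : ℝ) : ℂ) + ((x 0 : ℝ) : ℂ) * ((ξ 0 : ℝ) : ℂ) := by
    rw [mdot]
    push_cast
    ring
  have hV : (∑ i : Fin n, ((ξ i.succ : ℝ) : ℂ) ^ 2) = ((ξ 0 : ℝ) : ℂ) ^ 2 := by
    have h0 : (∑ i : Fin n, (ξ i.succ) ^ 2 : ℝ) = (ξ 0) ^ 2 := by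
      have h1 := hnull
      rw [mdot] at h1
      have h2 : (∑ i : Fin n, ξ i.succ * ξ i.succ : ℝ) = ∑ i : Fin n, (ξ i.succ) ^ 2 :=
        Finset.sum_congr rfl (fun i _ => (sq (ξ i.succ)).symm)
      nlinarith [h1, h2]
    calc (∑ i : Fin n, ((ξ i.succ : ℝ) : ℂ) ^ 2)
        = (((∑ i : Fin n, (ξ i.succ) ^ 2 : ℝ)) : ℂ) := by push_cast; rfl
      _ = _ := by rw [h0]; push_cast; ring
  rw [hS1, hV]
  have hFne : ((mdot x ξ : ℝ) : ℂ) ≠ 0 := by exact_mod_cast hx.ne'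
  have hfi : ((mdot x ξ : ℝ) : ℂ) * ((mdot x ξ : ℝ) : ℂ)⁻¹ = 1 := mul_inv_cancel₀ hFne
  linear_combination (-(n : ℂ) * σ * Psi σ ξ x - σ * (σ - 1) * Psi σ ξ x *
    (((mdot x ξ : ℝ) : ℂ) * ((mdot x ξ : ℝ) : ℂ)⁻¹ + 1)) * hfi
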